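/- Let B = Σ_{n≥0} (Σ_{π ∈ S_n(132)} t^{bdes(π)}) x^n and let B̄ = Σ_{n≥1} (Σ_{π ∈ S_n(132), π_1 = n} t^{bdes(π)}) x^n, both regarded as formal power series in x with coefficients in ℤ[t]. Then B = 1 + B̄ + x(B − 1) + t·x·(B − 1)² and B̄ = x·(1 + B̄ + t·(B − B̄ − 1)) as identities in (ℤ[t])[[x]]. -/

import Mathlib

open scoped Classical

/-- A permutation `π` of `Fin n` contains the pattern `σ` (a permutation of `Fin m`)
if some subsequence of the one-line notation of `π` standardizes to `σ`. -/
def Contains {n m : ℕ} (π : Equiv.Perm (Fin n)) (σ : Equiv.Perm (Fin m)) : Prop :=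
  ∃ f : Fin m → Fin n, StrictMono f ∧ ∀ a b : Fin m, σ a < σ b ↔ π (f a) < π (f b)

/-- `π` avoids the pattern `σ`. -/
def Avoids {n m : ℕ} (π : Equiv.Perm (Fin n)) (σ : Equiv.Perm (Fin m)) : Prop :=
  ¬ Contains π σ

/-- The pattern 123 (identity, in 0-indexed one-line notation `[0,1,2]`). -/
def perm123 : Equiv.Perm (Fin 3) := 1

/-- The pattern 132 (0-indexed one-line notation `[0,2,1]`). -/
def perm132 : Equiv.Perm (Fin 3) := ⟨![0, 2, 1], ![0, 2, 1], by decide, by decide⟩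

/-- The pattern 213 (0-indexed one-line notation `[1,0,2]`). -/
def perm213 : Equiv.Perm (Fin 3) := ⟨![1, 0, 2], ![1, 0, 2], by decide, by decide⟩

/-- The pattern 231 (0-indexed one-line notation `[1,2,0]`). -/
def perm231 : Equiv.Perm (Fin 3) := ⟨![1, 2, 0], ![2, 0, 1], by decide, by decide⟩

/-- The pattern 312 (0-indexed one-line notation `[2,0,1]`). -/
def perm312 : Equiv.Perm (Fin 3) := ⟨![2, 0, 1], ![1, 2, 0], by decide, by decide⟩

/-- The pattern 321 (0-indexed one-line notation `[2,1,0]`). -/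
def perm321 : Equiv.Perm (Fin 3) := ⟨![2, 1, 0], ![2, 1, 0], by decide, by decide⟩

/-- The number of big descents of `π`: 0-indexed positions `k` with `π k > π (k+1) + 1`. -/
def bdes {n : ℕ} (π : Equiv.Perm (Fin n)) : ℕ :=
  ((Finset.range n).filter fun k =>
    ∃ hk : k + 1 < n, (π ⟨k + 1, hk⟩ : ℕ) + 1 < (π ⟨k, Nat.lt_of_succ_lt hk⟩ : ℕ)).card

/-- The generating function `B = Σ_n Σ_{π ∈ S_n(132)} t^{bdes π} x^n`, as a formal power
series in `x` with coefficients in `ℤ[t]`. -/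
noncomputable def B132 : PowerSeries (Polynomial ℤ) :=
  PowerSeries.mk fun n =>
    ∑ π ∈ Finset.univ.filter (fun π : Equiv.Perm (Fin n) => Avoids π perm132),
      Polynomial.X ^ bdes π

/-- The generating function `B̄ = Σ_{n≥1} Σ_{π ∈ S_n(132), π₁ = n} t^{bdes π} x^n`, the
restriction of `B132` to permutations whose first letter is the largest value. -/
noncomputable def Bbar132 : PowerSeries (Polynomial ℤ) :=
  PowerSeries.mk fun n =>
    if h : 0 < n then
      ∑ π ∈ Finset.univ.filter
        (fun π : Equiv.Perm (Fin n) => Avoids π perm132 ∧ ((π ⟨0, h⟩ : ℕ) = n - 1)),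
        Polynomial.X ^ bdes π
    else 0


namespace AvAux

def bd : List ℕ → ℕ
  | [] => 0
  | [_] => 0
  | x :: y :: r => bd (y :: r) + (if y + 1 < x then 1 else 0)

def has132 (l : List ℕ) : Prop := ∃ x y z : ℕ, [x, y, z].Sublist l ∧ x < z ∧ z < y

theorem bd_map_add (m : ℕ) : ∀ l : List ℕ, bd (l.map (· + m)) = bd l
  | [] => rfl
  | [_] => rfl
  | x :: y :: r => by
    have ih := bd_map_add m (y :: r)
    simp only [List.map_cons, bd] at *
    rw [ih]
    congr 1
    by_cases h : y + 1 < x <;> simp [h] <;> omega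

theorem bd_append_cons : ∀ (a : List ℕ) (x : ℕ) (b : List ℕ),
    bd (a ++ x :: b) = bd (a ++ [x]) + bd (x :: b)
  | [], x, b => by simp [bd]
  | [y], x, b => by simp [bd]; ring
  | y :: z :: a, x, b => by
    have ih := bd_append_cons (z :: a) x b
    simp only [List.cons_append, List.append_eq, bd] at *
    omega

theorem bd_concat : ∀ (a : List ℕ) (x : ℕ), (∀ y ∈ a, y ≤ x + 1) → bd (a ++ [x]) = bd a
  | [], x, _ => rfl
  | [y], x, h => by
    have : y ≤ x + 1 := h y (by simp)
    simp [bd]; omega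
  | y :: z :: a, x, h => by
    have ih := bd_concat (z :: a) x (fun u hu => h u (by simp at hu ⊢; tauto))
    simp only [List.cons_append, List.append_eq, bd] at *
    omega

theorem bd_cons_of_big (x : ℕ) (b : List ℕ) (hb : b ≠ []) (h : b.headI + 1 < x) :
    bd (x :: b) = bd b + 1 := by
  cases b with
  | nil => simp at hb
  | cons y r => simp only [List.headI] at h; simp [bd, h]

theorem has132_map_add (m : ℕ) (l : List ℕ) : has132 (l.map (· + m)) ↔ has132 l := by
  constructor
  · rintro ⟨x, y, z, hs, h1, h2⟩
    obtain ⟨l', hl', hmap⟩ := List.sublist_map_iff.mp hs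
    match l', hmap with
    | [x', y', z'], h =>
      simp only [List.map_cons, List.map_nil, List.cons.injEq, and_true] at h
      obtain ⟨hx, hy, hz⟩ := h
      exact ⟨x', y', z', hl', by omega⟩
  · rintro ⟨x, y, z, hs, h1, h2⟩
    exact ⟨x + m, y + m, z + m, by simpa using hs.map (· + m), by omega, by omega⟩

theorem not_has132_append (a : List ℕ) (M : ℕ) (b : List ℕ)
    (haM : ∀ x ∈ a, x < M) (hbM : ∀ y ∈ b, y < M)
    (hab : ∀ x ∈ a, ∀ y ∈ b, y < x) :
    ¬ has132 (a ++ M :: b) ↔ (¬ has132 a ∧ ¬ has132 b) := by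
  constructor
  · intro h
    constructor
    · rintro ⟨x, y, z, hs, h1, h2⟩
      exact h ⟨x, y, z, hs.trans (by simp), h1, h2⟩
    · rintro ⟨x, y, z, hs, h1, h2⟩
      refine h ⟨x, y, z, ?_, h1, h2⟩
      exact hs.trans (((List.sublist_cons_self M b).trans (by simp)))
  · rintro ⟨ha, hb⟩ ⟨x, y, z, hs, h1, h2⟩
    rw [List.sublist_append_iff] at hs
    obtain ⟨s1, s2, heq, hs1, hs2⟩ := hs
    rcases s1 with _ | ⟨u, (_ | ⟨v, (_ | ⟨w, s1⟩)⟩)⟩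
    · simp only [List.nil_append] at heq; subst heq
      rcases List.sublist_cons_iff.mp hs2 with h' | ⟨r, hr, hr'⟩
      · exact hb ⟨x, y, z, h', h1, h2⟩
      · obtain ⟨h1', h2'⟩ : x = M ∧ [y, z] = r := by
          simp only [List.cons.injEq] at hr; exact ⟨hr.1, hr.2⟩
        subst h1'; subst h2'
        have hz : z ∈ b := hr'.subset (by simp)
        have := hbM z hz
        omega
    · obtain ⟨rfl, rfl⟩ : u = x ∧ s2 = [y, z] := by
        simp only [List.cons_append, List.nil_append, List.cons.injEq] at heq
        exact ⟨heq.1.symm, heq.2.symm⟩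
      have hxa : u ∈ a := hs1.subset (by simp)
      rcases List.sublist_cons_iff.mp hs2 with h' | ⟨r, hr, hr'⟩
      · have hz : z ∈ b := h'.subset (by simp)
        have := hab u hxa z hz
        omega
      · obtain ⟨h1', h2'⟩ : y = M ∧ [z] = r := by
          simp only [List.cons.injEq] at hr; exact ⟨hr.1, hr.2⟩
        subst h2'
        have hz : z ∈ b := hr'.subset (by simp)
        have := hab u hxa z hz
        omega
    · obtain ⟨rfl, rfl, rfl⟩ : u = x ∧ v = y ∧ s2 = [z] := by
        simp only [List.cons_append, List.nil_append, List.cons.injEq] at heq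
        exact ⟨heq.1.symm, heq.2.1.symm, heq.2.2.symm⟩
      have hya : v ∈ a := hs1.subset (by simp)
      have hyM := haM v hya
      rcases List.sublist_cons_iff.mp hs2 with h' | ⟨r, hr, hr'⟩
      · have hz : z ∈ b := h'.subset (by simp)
        have hxa : u ∈ a := hs1.subset (by simp)
        have := hab u hxa z hz
        omega
      · obtain h1' : z = M := by
          simp only [List.cons.injEq] at hr; exact hr.1
        omega
    · obtain ⟨rfl, rfl, rfl, hnil⟩ : u = x ∧ v = y ∧ w = z ∧ [] = s1 ++ s2 := by
        simp only [List.cons_append, List.cons.injEq] at heq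
        exact ⟨heq.1.symm, heq.2.1.symm, heq.2.2.1.symm, heq.2.2.2⟩
      obtain ⟨rfl, rfl⟩ : s1 = [] ∧ s2 = [] := by
        have := congrArg List.length hnil
        simp at this
        constructor <;> [exact List.length_eq_zero_iff.mp (by omega); exact List.length_eq_zero_iff.mp (by omega)]
      exact ha ⟨u, v, w, by simpa using hs1, h1, h2⟩

theorem not_has132_nil : ¬ has132 ([] : List ℕ) := by
  rintro ⟨x, y, z, hs, _, _⟩
  simp at hs

theorem not_has132_cons (M : ℕ) (b : List ℕ) (hbM : ∀ y ∈ b, y < M) :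
    ¬ has132 (M :: b) ↔ ¬ has132 b := by
  have h := not_has132_append [] M b (by simp) hbM (by simp)
  simp only [List.nil_append] at h
  rw [h]
  have := not_has132_nil
  tauto

end AvAux

namespace AvAux

def toList {n : ℕ} (π : Equiv.Perm (Fin n)) : List ℕ := List.ofFn fun i => (π i : ℕ)

theorem length_toList {n : ℕ} (π : Equiv.Perm (Fin n)) : (toList π).length = n :=
  List.length_ofFn

theorem getElem_toList {n : ℕ} (π : Equiv.Perm (Fin n)) (i : ℕ) (h : i < (toList π).length) :
    (toList π)[i] = (π ⟨i, by rw [← length_toList π]; exact h⟩ : ℕ) := by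
  simp [toList]

theorem toList_perm_range {n : ℕ} (π : Equiv.Perm (Fin n)) :
    (toList π).Perm (List.range n) := by
  apply List.perm_of_nodup_nodup_toFinset_eq
  · exact List.nodup_ofFn.mpr fun i j h => π.injective (Fin.val_injective h)
  · exact List.nodup_range
  · ext x
    simp only [List.mem_toFinset, toList, List.mem_ofFn, List.mem_range, Set.mem_range]
    constructor
    · rintro ⟨i, rfl⟩; exact (π i).isLt
    · intro hx; exact ⟨π.symm ⟨x, hx⟩, by simp⟩

theorem toList_injective {n : ℕ} : Function.Injective (toList (n := n)) := by
  intro π π' h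
  have h2 : ∀ i, (π i : ℕ) = (π' i : ℕ) := fun i => congrFun (List.ofFn_inj.mp h) i
  exact Equiv.ext fun i => Fin.val_injective (h2 i)

theorem toList_surjective {n : ℕ} (l : List ℕ) (hl : l.Perm (List.range n)) :
    ∃ π : Equiv.Perm (Fin n), toList π = l := by
  have hlen : l.length = n := by simpa using hl.length_eq
  have hnd : l.Nodup := hl.nodup_iff.mpr ((List.nodup_range : (List.range n).Nodup))
  have hmem : ∀ (i : ℕ) (h : i < l.length), l[i] < n := fun i h => by
    have : l[i] ∈ List.range n := hl.subset (List.getElem_mem h)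
    simpa using this
  let f : Fin n → Fin n := fun i => ⟨l[(i : ℕ)]'(by omega), hmem _ _⟩
  have hinj : Function.Injective f := by
    intro i j hij
    have h1 : l.get ⟨i, by omega⟩ = l.get ⟨j, by omega⟩ := congrArg Fin.val hij
    have h2 := List.nodup_iff_injective_get.mp hnd h1
    have h3 : (i : ℕ) = (j : ℕ) := by injection h2
    exact Fin.val_injective h3
  refine ⟨Equiv.ofBijective f (Finite.injective_iff_bijective.mp hinj), ?_⟩
  apply List.ext_getElem (by simp [toList, hlen])
  intro i h1 h2
  simp [toList, Equiv.ofBijective, f]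

theorem contains132_of {n : ℕ} (π : Equiv.Perm (Fin n)) (p q r : Fin n)
    (hpq : p < q) (hpr : p < r) (hqr : q < r)
    (h1 : π p < π r) (h2 : π r < π q) : Contains π perm132 := by
  have hpq' : π p < π q := h1.trans h2
  refine ⟨fun a => if (a : ℕ) = 0 then p else if (a : ℕ) = 1 then q else r, ?_, ?_⟩
  · intro a b hab
    fin_cases a <;> fin_cases b <;>
      first
      | exact absurd hab (by decide)
      | exact hpq
      | exact hpr
      | exact hqr
  · intro a b
    fin_cases a <;> fin_cases b
    · exact iff_of_false (by decide) (lt_irrefl _)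
    · exact iff_of_true (by decide) hpq'
    · exact iff_of_true (by decide) h1
    · exact iff_of_false (by decide) (lt_asymm hpq')
    · exact iff_of_false (by decide) (lt_irrefl _)
    · exact iff_of_false (by decide) (lt_asymm h2)
    · exact iff_of_false (by decide) (lt_asymm h1)
    · exact iff_of_true (by decide) h2
    · exact iff_of_false (by decide) (lt_irrefl _)

theorem contains132_iff {n : ℕ} (π : Equiv.Perm (Fin n)) :
    Contains π perm132 ↔ has132 (toList π) := by
  constructor
  · rintro ⟨f, hf, hiff⟩
    have h02 : (π (f 0) : ℕ) < (π (f 2) : ℕ) := (hiff 0 2).mp (by decide)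
    have h21 : (π (f 2) : ℕ) < (π (f 1) : ℕ) := (hiff 2 1).mp (by decide)
    refine ⟨(π (f 0) : ℕ), (π (f 1) : ℕ), (π (f 2) : ℕ), ?_, h02, h21⟩
    have hn := length_toList π
    have hpw : List.Pairwise (fun i j : Fin (toList π).length => i < j)
        [Fin.cast hn.symm (f 0), Fin.cast hn.symm (f 1), Fin.cast hn.symm (f 2)] := by
      have h01 : f 0 < f 1 := hf (by decide : (0 : Fin 3) < 1)
      have h02' : f 0 < f 2 := hf (by decide : (0 : Fin 3) < 2)
      have h12 : f 1 < f 2 := hf (by decide : (1 : Fin 3) < 2)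
      refine List.Pairwise.cons ?_ (List.Pairwise.cons ?_ (List.Pairwise.cons ?_ List.Pairwise.nil))
      · intro a ha
        rcases List.mem_cons.mp ha with rfl | ha
        · exact h01
        · rcases List.mem_cons.mp ha with rfl | ha
          · exact h02'
          · simp at ha
      · intro a ha
        rcases List.mem_cons.mp ha with rfl | ha
        · exact h12
        · simp at ha
      · intro a ha; simp at ha
    have hsub := List.map_getElem_sublist hpw
    simp only [List.map_cons, List.map_nil, Fin.getElem_fin, getElem_toList] at hsub
    exact hsub
  · rintro ⟨x, y, z, hs, h1, h2⟩
    obtain ⟨is, hmap, hpw⟩ := List.sublist_eq_map_getElem hs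
    rcases is with _ | ⟨i0, _ | ⟨i1, _ | ⟨i2, _ | ⟨i3, r⟩⟩⟩⟩
    case nil => exact absurd (congrArg List.length hmap) (by simp)
    case cons.nil => exact absurd (congrArg List.length hmap) (by simp)
    case cons.cons.nil => exact absurd (congrArg List.length hmap) (by simp)
    case cons.cons.cons.cons =>
      exact absurd (congrArg List.length hmap) (by intro hh; simp at hh; try omega)
    simp only [List.map_cons, List.map_nil, List.cons.injEq, and_true] at hmap
    obtain ⟨hx, hy, hz⟩ := hmap
    have h01 : (i0 : ℕ) < (i1 : ℕ) := by
      have := List.pairwise_cons.mp hpw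
      exact this.1 i1 (by simp)
    have h02' : (i0 : ℕ) < (i2 : ℕ) := by
      have := List.pairwise_cons.mp hpw
      exact this.1 i2 (by simp)
    have h12 : (i1 : ℕ) < (i2 : ℕ) := by
      have := List.pairwise_cons.mp (List.pairwise_cons.mp hpw).2
      exact this.1 i2 (by simp)
    have hn := length_toList π
    have e0 : (π (Fin.cast hn i0) : ℕ) = x := by rw [hx, Fin.getElem_fin, getElem_toList]; rfl
    have e1 : (π (Fin.cast hn i1) : ℕ) = y := by rw [hy, Fin.getElem_fin, getElem_toList]; rfl
    have e2 : (π (Fin.cast hn i2) : ℕ) = z := by rw [hz, Fin.getElem_fin, getElem_toList]; rfl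
    refine contains132_of π (Fin.cast hn i0) (Fin.cast hn i1) (Fin.cast hn i2) h01 h02' h12 ?_ ?_
    · rw [Fin.lt_def, e0, e2]; exact h1
    · rw [Fin.lt_def, e2, e1]; exact h2

theorem avoids132_iff {n : ℕ} (π : Equiv.Perm (Fin n)) :
    Avoids π perm132 ↔ ¬ has132 (toList π) := not_congr (contains132_iff π)

end AvAux

namespace AvAux

def bdC (l : List ℕ) : ℕ :=
  ((Finset.range l.length).filter fun k =>
    ∃ hk : k + 1 < l.length, l[k + 1]'hk + 1 < l[k]'(Nat.lt_of_succ_lt hk)).card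

theorem bdC_cons (x : ℕ) (t : List ℕ) :
    bdC (x :: t) = bdC t + (if ∃ h : 0 < t.length, t[0]'h + 1 < x then 1 else 0) := by
  unfold bdC
  rw [Finset.card_filter, Finset.card_filter]
  simp only [List.length_cons]
  rw [Finset.sum_range_succ']
  congr 1
  · apply Finset.sum_congr rfl
    intro k _
    congr 1
    apply propext
    constructor
    · rintro ⟨h, hlt⟩
      exact ⟨by omega, by simpa using hlt⟩
    · rintro ⟨h, hlt⟩
      exact ⟨by omega, by simpa using hlt⟩
  · congr 1
    apply propext
    constructor
    · rintro ⟨h, hlt⟩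
      exact ⟨by omega, by simpa using hlt⟩
    · rintro ⟨h, hlt⟩
      exact ⟨by omega, by simpa using hlt⟩

theorem bdC_eq_bd : ∀ l : List ℕ, bdC l = bd l
  | [] => by simp [bdC, bd]
  | [x] => by
    rw [bdC_cons]
    simp [bdC, bd]
  | x :: y :: r => by
    rw [bdC_cons, bdC_eq_bd (y :: r)]
    simp only [bd]
    congr 1
    by_cases h : y + 1 < x
    · rw [if_pos h, if_pos ⟨by simp, by simpa using h⟩]
    · rw [if_neg h, if_neg]
      rintro ⟨h1, h2⟩
      exact h (by simpa using h2)

theorem bdes_eq_bd {n : ℕ} (π : Equiv.Perm (Fin n)) : bdes π = bd (toList π) := by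
  rw [← bdC_eq_bd]
  unfold bdes bdC
  congr 1
  ext k
  simp only [Finset.mem_filter, Finset.mem_range]
  constructor
  · rintro ⟨hk, h, hlt⟩
    refine ⟨by rw [length_toList]; exact hk, by rw [length_toList]; exact h, ?_⟩
    rw [getElem_toList, getElem_toList]
    exact hlt
  · rintro ⟨hk, h, hlt⟩
    rw [getElem_toList, getElem_toList] at hlt
    exact ⟨by rw [← length_toList π]; exact hk, by rw [← length_toList π]; exact h, hlt⟩

theorem headI_toList {n : ℕ} (h : 0 < n) (π : Equiv.Perm (Fin n)) :
    (toList π).headI = (π ⟨0, h⟩ : ℕ) := by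
  cases n with
  | zero => omega
  | succ m =>
    simp only [toList, List.ofFn_succ, List.headI]
    congr 1

theorem sum_transfer' (n : ℕ) (Q : List ℕ → Prop) (s : Finset (Equiv.Perm (Fin n)))
    (t : Finset (List ℕ)) (hs : ∀ π, π ∈ s ↔ Q (toList π))
    (ht : ∀ l, l ∈ t ↔ l.Perm (List.range n) ∧ Q l) :
    ∑ π ∈ s, (Polynomial.X : Polynomial ℤ) ^ bdes π
      = ∑ l ∈ t, (Polynomial.X : Polynomial ℤ) ^ bd l := by
  apply Finset.sum_bij (fun π _ => toList π)
  · intro π hπ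
    rw [ht]
    exact ⟨toList_perm_range π, (hs π).mp hπ⟩
  · intro π _ π' _ h
    exact toList_injective h
  · intro l hl
    rw [ht] at hl
    obtain ⟨π, rfl⟩ := toList_surjective l hl.1
    exact ⟨π, (hs π).mpr hl.2, rfl⟩
  · intro π _
    rw [bdes_eq_bd]

end AvAux

namespace AvAux

noncomputable def A (n : ℕ) : Finset (List ℕ) :=
  ((List.range n).permutations.toFinset).filter fun l => ¬ has132 l

theorem mem_A {n : ℕ} {l : List ℕ} : l ∈ A n ↔ l.Perm (List.range n) ∧ ¬ has132 l := by
  simp [A, List.mem_permutations]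

theorem lt_of_mem_of_perm_range {n : ℕ} {l : List ℕ} (hl : l.Perm (List.range n))
    {x : ℕ} (hx : x ∈ l) : x < n := by
  have := hl.subset hx
  simpa using this

theorem length_of_mem_A {n : ℕ} {l : List ℕ} (hl : l ∈ A n) : l.length = n := by
  have := (mem_A.mp hl).1.length_eq
  simpa using this

theorem nodup_of_mem_A {n : ℕ} {l : List ℕ} (hl : l ∈ A n) : l.Nodup :=
  (mem_A.mp hl).1.nodup_iff.mpr ((List.nodup_range : (List.range n).Nodup))

noncomputable def bP (n : ℕ) : Polynomial ℤ := ∑ l ∈ A n, Polynomial.X ^ bd l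

noncomputable def bbP (n : ℕ) : Polynomial ℤ :=
  ∑ l ∈ (A n).filter (fun l => l.headI = n - 1), Polynomial.X ^ bd l

theorem A_zero : A 0 = {[]} := by
  ext l
  simp only [mem_A, List.range_zero, List.perm_nil, Finset.mem_singleton]
  constructor
  · rintro ⟨rfl, -⟩; rfl
  · rintro rfl; exact ⟨rfl, not_has132_nil⟩

theorem A_one : A 1 = {[0]} := by
  ext l
  simp only [mem_A, Finset.mem_singleton]
  constructor
  · rintro ⟨hp, -⟩
    exact List.perm_singleton.mp (by simpa [show List.range 1 = [0] from rfl] using hp)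
  · rintro rfl
    refine ⟨by rw [show List.range 1 = [0] from rfl], ?_⟩
    rintro ⟨x, y, z, hs, -, -⟩
    have := hs.length_le
    simp at this

theorem bP_zero : bP 0 = 1 := by simp [bP, A_zero, bd]

theorem bP_one : bP 1 = 1 := by simp [bP, A_one, bd]

theorem bbP_one : bbP 1 = 1 := by
  have h : (A 1).filter (fun l => l.headI = 1 - 1) = {[0]} := by
    rw [A_one]
    ext l
    simp only [Finset.mem_filter, Finset.mem_singleton]
    constructor
    · rintro ⟨rfl, -⟩; rfl
    · rintro rfl; exact ⟨rfl, rfl⟩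
  rw [bbP, h]
  simp [bd]

theorem range_succ_perm (n : ℕ) : (List.range (n+1)).Perm (n :: List.range n) := by
  rw [List.range_succ]
  exact List.perm_append_singleton n (List.range n)

/-- The recurrence for `bbP`. -/
theorem bbP_succ (n : ℕ) (hn : 1 ≤ n) :
    bbP (n + 1) = bbP n + Polynomial.X * (bP n - bbP n) := by
  have key : (∑ t ∈ A n, (Polynomial.X : Polynomial ℤ) ^ (bd t + (if t.headI = n - 1 then 0 else 1)))
      = bbP (n + 1) := by
    rw [bbP]
    apply Finset.sum_bij (fun (t : List ℕ) (_ : t ∈ A n) => (n : ℕ) :: t)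
    · intro t ht
      obtain ⟨hp, hav⟩ := mem_A.mp ht
      have hbound : ∀ y ∈ t, y < n := fun y hy => lt_of_mem_of_perm_range hp hy
      refine Finset.mem_filter.mpr ⟨mem_A.mpr ⟨?_, ?_⟩, by simp⟩
      · exact (hp.cons n).trans (range_succ_perm n).symm
      · exact (not_has132_cons n t hbound).mpr hav
    · intro t _ t' _ h
      exact (List.cons.injEq .. ▸ h).2
    · intro l hl
      rw [Finset.mem_filter, mem_A] at hl
      obtain ⟨⟨hp, hav⟩, hhead⟩ := hl
      obtain ⟨u, t, rfl⟩ : ∃ u t, l = u :: t := by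
        cases l with
        | nil => exact absurd hp.length_eq (by simp)
        | cons u t => exact ⟨u, t, rfl⟩
      have hu : n = u := by simp at hhead; omega
      subst hu
      have hpt : t.Perm (List.range n) := (hp.trans (range_succ_perm n)).cons_inv
      have hbound : ∀ y ∈ t, y < n := fun y hy => lt_of_mem_of_perm_range hpt hy
      refine ⟨t, mem_A.mpr ⟨hpt, (not_has132_cons n t hbound).mp hav⟩, rfl⟩
    · intro t ht
      obtain ⟨hp, _⟩ := mem_A.mp ht
      obtain ⟨y, r, rfl⟩ : ∃ y r, t = y :: r := by
        cases t with
        | nil => exact absurd hp.length_eq (by simp; omega)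
        | cons y r => exact ⟨y, r, rfl⟩
      have hy : y < n := lt_of_mem_of_perm_range hp (by simp)
      have : bd (n :: y :: r) = bd (y :: r) + (if y + 1 < n then 1 else 0) := rfl
      rw [this]
      congr 2
      simp only [List.headI]
      by_cases h : y = n - 1
      · show (if y = n - 1 then 0 else 1) = _
        rw [if_pos h, if_neg (by omega)]
      · show (if y = n - 1 then 0 else 1) = _
        rw [if_neg h, if_pos (by omega)]
  rw [← key]
  have hsplit := Finset.sum_filter_add_sum_filter_not (A n) (fun t => t.headI = n - 1)
    (f := fun t => (Polynomial.X : Polynomial ℤ) ^ (bd t + (if t.headI = n - 1 then 0 else 1)))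
  rw [← hsplit]
  have h1 : ∑ t ∈ (A n).filter (fun t => t.headI = n - 1),
      (Polynomial.X : Polynomial ℤ) ^ (bd t + (if t.headI = n - 1 then 0 else 1)) = bbP n := by
    rw [bbP]
    apply Finset.sum_congr rfl
    intro t ht
    rw [if_pos (Finset.mem_filter.mp ht).2, add_zero]
  have h2 : ∑ t ∈ (A n).filter (fun t => ¬ t.headI = n - 1),
      (Polynomial.X : Polynomial ℤ) ^ (bd t + (if t.headI = n - 1 then 0 else 1))
      = Polynomial.X * (bP n - bbP n) := by
    have h3 : ∑ t ∈ (A n).filter (fun t => ¬ t.headI = n - 1),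
        (Polynomial.X : Polynomial ℤ) ^ (bd t + (if t.headI = n - 1 then 0 else 1))
        = ∑ t ∈ (A n).filter (fun t => ¬ t.headI = n - 1),
            Polynomial.X * (Polynomial.X : Polynomial ℤ) ^ (bd t) := by
      apply Finset.sum_congr rfl
      intro t ht
      rw [if_neg (Finset.mem_filter.mp ht).2, pow_add, pow_one, mul_comm]
    rw [h3, ← Finset.mul_sum]
    congr 1
    have h4 := Finset.sum_filter_add_sum_filter_not (A n) (fun t => t.headI = n - 1)
      (f := fun t => (Polynomial.X : Polynomial ℤ) ^ bd t)
    have : bbP n + ∑ t ∈ (A n).filter (fun t => ¬ t.headI = n - 1), (Polynomial.X : Polynomial ℤ) ^ bd t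
        = bP n := by rw [bbP, bP]; exact h4
    linear_combination this
  rw [h1, h2]

end AvAux

namespace AvAux

theorem prefix_eq_of_append_eq (n : ℕ) :
    ∀ (p p' c c' : List ℕ), n ∉ p → n ∉ p' → p ++ n :: c = p' ++ n :: c' →
      p = p' ∧ c = c'
  | [], [], c, c', _, _, h => by
    simp only [List.nil_append, List.cons.injEq] at h
    exact ⟨rfl, h.2⟩
  | [], u' :: q', c, c', _, hn', h => by
    simp only [List.nil_append, List.cons_append, List.cons.injEq] at h
    exact absurd (h.1 ▸ (List.mem_cons_self : u' ∈ u' :: q')) hn'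
  | u :: q, [], c, c', hn, _, h => by
    simp only [List.nil_append, List.cons_append, List.cons.injEq] at h
    exact absurd (h.1.symm ▸ (List.mem_cons_self : u ∈ u :: q)) hn
  | u :: q, u' :: q', c, c', hn, hn', h => by
    simp only [List.cons_append, List.cons.injEq] at h
    obtain ⟨rfl, h2⟩ := h
    have ih := prefix_eq_of_append_eq n q q' c c'
      (fun hm => hn (List.mem_cons_of_mem _ hm))
      (fun hm => hn' (List.mem_cons_of_mem _ hm)) h2
    exact ⟨by rw [ih.1], ih.2⟩

/-- the image of the gluing map is a 132-avoiding permutation list of `range (n+1)` -/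
theorem g_mem {n k : ℕ} (hk : 1 ≤ k) (hk2 : k ≤ n) {a c : List ℕ}
    (ha : a ∈ A k) (hc : c ∈ A (n - k)) :
    (a.map (· + (n - k)) ++ n :: c) ∈ A (n + 1)
      ∧ ¬ (a.map (· + (n - k)) ++ n :: c).headI = n := by
  set m := n - k with hm
  obtain ⟨hap, haav⟩ := mem_A.mp ha
  obtain ⟨hcp, hcav⟩ := mem_A.mp hc
  have hab : ∀ x ∈ a, x < k := fun x hx => lt_of_mem_of_perm_range hap hx
  have hcb : ∀ y ∈ c, y < m := fun y hy => lt_of_mem_of_perm_range hcp hy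
  have hmapb : ∀ x ∈ a.map (· + m), m ≤ x ∧ x < n := by
    intro x hx
    obtain ⟨y, hy, rfl⟩ := List.mem_map.mp hx
    have := hab y hy
    constructor <;> omega
  constructor
  · refine mem_A.mpr ⟨?_, ?_⟩
    · -- permutation of range (n+1)
      have p1 : (a.map (· + m) ++ n :: c).Perm (a.map (· + m) ++ (c ++ [n])) :=
        List.Perm.append_left _ (List.perm_append_singleton n c).symm
      have p2 : (a.map (· + m) ++ (c ++ [n])).Perm
          ((List.range k).map (· + m) ++ (List.range m ++ [n])) :=
        List.Perm.append (hap.map _) (List.Perm.append hcp (List.Perm.refl _))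
      have p3 : ((List.range k).map (· + m) ++ (List.range m ++ [n])).Perm
          ((List.range m ++ (List.range k).map (· + m)) ++ [n]) := by
        rw [← List.append_assoc]
        exact List.Perm.append List.perm_append_comm (List.Perm.refl _)
      have e2 : List.range m ++ (List.range k).map (· + m) = List.range n := by
        rw [show n = m + k by omega, List.range_add]
        congr 1
        exact (List.map_congr_left (fun x _ => Nat.add_comm m x)).symm
      have e3 : List.range n ++ [n] = List.range (n + 1) := (List.range_succ (n := n)).symm
      exact ((p1.trans p2).trans p3).trans (by rw [e2, e3])
    · rw [not_has132_append (a.map (· + m)) n c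
        (fun x hx => by have := (hmapb x hx).2; omega) (fun y hy => by have := hcb y hy; omega)
        (fun x hx y hy => by have := (hmapb x hx).1; have := hcb y hy; omega)]
      refine ⟨?_, hcav⟩
      rw [show (fun x => x + m) = (· + m) from rfl, has132_map_add]
      exact haav
  · -- head is not n
    obtain ⟨x, a', rfl⟩ : ∃ x a', a = x :: a' := by
      cases a with
      | nil => exact absurd hap.length_eq (by simp; omega)
      | cons x a' => exact ⟨x, a', rfl⟩
    have := hab x (by simp)
    simp only [List.map_cons, List.cons_append, List.headI]
    omega

theorem bd_g {n k : ℕ} (hk : 1 ≤ k) (hk2 : k ≤ n) {a c : List ℕ}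
    (ha : a ∈ A k) (hc : c ∈ A (n - k)) :
    bd (a.map (· + (n - k)) ++ n :: c)
      = bd a + bd c + (if k = n then 0 else 1) := by
  set m := n - k with hm
  obtain ⟨hap, haav⟩ := mem_A.mp ha
  obtain ⟨hcp, hcav⟩ := mem_A.mp hc
  have hab : ∀ x ∈ a, x < k := fun x hx => lt_of_mem_of_perm_range hap hx
  have hmapb : ∀ x ∈ a.map (· + m), x ≤ n + 1 := by
    intro x hx
    obtain ⟨y, hy, rfl⟩ := List.mem_map.mp hx
    have := hab y hy
    omega
  by_cases hkn : k = n
  · -- c is empty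
    have hm0 : m = 0 := by omega
    have hc0 : c = [] := by
      have := hcp.length_eq
      rw [hm0] at this
      simpa using this
    subst hc0
    rw [if_pos hkn, bd_concat _ _ hmapb, bd_map_add]
    simp [bd]
  · have hmpos : 1 ≤ m := by omega
    obtain ⟨y, c', rfl⟩ : ∃ y c', c = y :: c' := by
      cases c with
      | nil => exact absurd hcp.length_eq (by simp; omega)
      | cons y c' => exact ⟨y, c', rfl⟩
    have hy : y < m := lt_of_mem_of_perm_range hcp (by simp)
    rw [if_neg hkn, bd_append_cons, bd_concat _ _ hmapb, bd_map_add,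
      bd_cons_of_big n (y :: c') (by simp) (by simp only [List.headI]; omega)]
    ring

end AvAux

namespace AvAux

theorem has132_mono {l l' : List ℕ} (h : l.Sublist l') : has132 l → has132 l' :=
  fun ⟨x, y, z, hs, h1, h2⟩ => ⟨x, y, z, hs.trans h, h1, h2⟩

theorem g_surj {n : ℕ} {l : List ℕ} (hl : l ∈ A (n + 1)) (hh : ¬ l.headI = n) :
    ∃ k, 1 ≤ k ∧ k ≤ n ∧ ∃ a ∈ A k, ∃ c ∈ A (n - k),
      a.map (· + (n - k)) ++ n :: c = l := by
  obtain ⟨hp, hav⟩ := mem_A.mp hl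
  have hnd : l.Nodup := hp.nodup_iff.mpr ((List.nodup_range : (List.range _).Nodup))
  have hlen : l.length = n + 1 := by simpa using hp.length_eq
  have hmem : n ∈ l := hp.mem_iff.mpr (by simp)
  obtain ⟨p, c, rfl⟩ := List.append_of_mem hmem
  have hbnd : ∀ x ∈ p ++ n :: c, x < n + 1 := fun x hx => lt_of_mem_of_perm_range hp hx
  -- nodup structure
  have hndp : p.Nodup := hnd.of_append_left
  have hndc : (n :: c).Nodup := hnd.of_append_right
  have hdisj : ∀ x ∈ p, x ∉ n :: c := by
    intro x hx hx'
    exact (List.disjoint_of_nodup_append hnd) hx hx'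
  have hnp : n ∉ p := fun h => hdisj n h (by simp)
  have hnc : n ∉ c := by
    have := List.nodup_cons.mp hndc
    exact this.1
  have hndc' : c.Nodup := (List.nodup_cons.mp hndc).2
  set k := p.length with hkdef
  set m := c.length with hmdef
  have hkm : k + m = n := by
    simp only [List.length_append, List.length_cons] at hlen
    omega
  have hk1 : 1 ≤ k := by
    rcases p with _ | ⟨u, q⟩
    · exact absurd rfl hh
    · rw [hkdef]; simp
  -- all prefix elements are < n, all suffix elements < n
  have hpn : ∀ x ∈ p, x < n := by
    intro x hx
    have h1 := hbnd x (by simp [hx])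
    have h2 : x ≠ n := fun h => hnp (h ▸ hx)
    omega
  have hcn : ∀ y ∈ c, y < n := by
    intro y hy
    have h1 := hbnd y (by simp [hy])
    have h2 : y ≠ n := fun h => hnc (h ▸ hy)
    omega
  -- suffix elements are smaller than prefix elements
  have hpc : ∀ x ∈ p, ∀ y ∈ c, y < x := by
    intro x hx y hy
    by_contra hcon
    push_neg at hcon
    have hxy : x ≠ y := fun h => hdisj x hx (h ▸ List.mem_cons_of_mem n hy)
    have hxy' : x < y := by omega
    apply hav
    refine ⟨x, n, y, ?_, hxy', hcn y hy⟩
    exact List.Sublist.append (List.singleton_sublist.mpr hx)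
      (List.Sublist.cons₂ n (List.singleton_sublist.mpr hy))
  -- suffix elements are < m
  have hcm : ∀ y ∈ c, y < m := by
    intro y hy
    by_contra hcon
    push_neg at hcon
    have hsub : p.toFinset ⊆ Finset.Ioo y n := by
      intro x hx
      rw [List.mem_toFinset] at hx
      rw [Finset.mem_Ioo]
      exact ⟨hpc x hx y hy, hpn x hx⟩
    have hcard1 : p.toFinset.card = k := List.toFinset_card_of_nodup hndp
    have hcard2 : (Finset.Ioo y n).card = n - y - 1 := Nat.card_Ioo y n
    have := Finset.card_le_card hsub
    have hyn := hcn y hy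
    omega
  -- c is a permutation of range m
  have hcperm : c.Perm (List.range m) := by
    apply List.perm_of_nodup_nodup_toFinset_eq hndc' ((List.nodup_range : (List.range m).Nodup))
    apply Finset.eq_of_subset_of_card_le
    · intro y hy
      rw [List.mem_toFinset] at hy
      rw [List.mem_toFinset, List.mem_range]
      exact hcm y hy
    · rw [List.toFinset_card_of_nodup hndc', List.toFinset_card_of_nodup ((List.nodup_range : (List.range m).Nodup))]
      simp [hmdef]
  -- prefix elements are ≥ m
  have hpm : ∀ x ∈ p, m ≤ x := by
    intro x hx
    by_contra hcon
    push_neg at hcon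
    have : x ∈ c := hcperm.mem_iff.mpr (by simp; omega)
    exact hdisj x hx (List.mem_cons_of_mem n this)
  -- the standardized prefix
  set a := p.map (· - m) with hadef
  have hmapback : a.map (· + m) = p := by
    rw [hadef, List.map_map]
    have : ∀ x ∈ p, ((· + m) ∘ (· - m)) x = id x := by
      intro x hx
      have := hpm x hx
      simp only [Function.comp_apply, id_eq]
      omega
    rw [List.map_congr_left this, List.map_id]
  have hnda : a.Nodup := by
    apply List.Nodup.map_on _ hndp
    intro x hx y hy hxy
    have := hpm x hx
    have := hpm y hy
    omega
  have haperm : a.Perm (List.range k) := by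
    apply List.perm_of_nodup_nodup_toFinset_eq hnda ((List.nodup_range : (List.range k).Nodup))
    apply Finset.eq_of_subset_of_card_le
    · intro x hx
      rw [List.mem_toFinset, hadef, List.mem_map] at hx
      obtain ⟨u, hu, rfl⟩ := hx
      rw [List.mem_toFinset, List.mem_range]
      have := hpn u hu
      have := hpm u hu
      omega
    · rw [List.toFinset_card_of_nodup hnda, List.toFinset_card_of_nodup ((List.nodup_range : (List.range k).Nodup))]
      simp [hadef, hkdef]
  -- avoidance of parts
  have havp : ¬ has132 p :=
    fun h => hav (has132_mono (List.sublist_append_left p (n :: c)) h)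
  have havc : ¬ has132 c :=
    fun h => hav (has132_mono ((List.sublist_cons_self n c).trans
      (List.sublist_append_right p (n :: c))) h)
  have hava : ¬ has132 a :=
    fun h => havp (hmapback ▸ (has132_map_add m a).mpr h)
  have hmk : n - k = m := by omega
  refine ⟨k, hk1, by omega, a, mem_A.mpr ⟨haperm, hava⟩, c, ?_, ?_⟩
  · rw [hmk]
    exact mem_A.mpr ⟨hcperm, havc⟩
  · rw [hmk, hmapback]

end AvAux

namespace AvAux

theorem bP_succ (n : ℕ) :
    bP (n + 1) = bbP (n + 1) + (if n = 0 then 0 else bP n)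
      + Polynomial.X * ∑ k ∈ Finset.Ico 1 n, bP k * bP (n - k) := by
  rcases Nat.eq_zero_or_pos n with rfl | hn
  · simp [bP_one, bbP_one]
  have hsplit := Finset.sum_filter_add_sum_filter_not (A (n + 1)) (fun l => l.headI = n)
    (f := fun l => (Polynomial.X : Polynomial ℤ) ^ bd l)
  have hbb : ∑ l ∈ (A (n + 1)).filter (fun l => l.headI = n),
      (Polynomial.X : Polynomial ℤ) ^ bd l = bbP (n + 1) := by
    rw [bbP]
    norm_num
  have hbij : ∑ l ∈ (A (n + 1)).filter (fun l => ¬ l.headI = n),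
        (Polynomial.X : Polynomial ℤ) ^ bd l
      = ∑ x ∈ (Finset.Ico 1 (n + 1)).sigma (fun k => (A k) ×ˢ (A (n - k))),
          (Polynomial.X : Polynomial ℤ)
            ^ (bd x.2.1 + bd x.2.2 + (if x.1 = n then 0 else 1)) := by
    symm
    apply Finset.sum_bij
      (fun (x : Σ _ : ℕ, List ℕ × List ℕ) _ => x.2.1.map (· + (n - x.1)) ++ n :: x.2.2)
    · rintro ⟨k, a, c⟩ hx
      simp only [Finset.mem_sigma, Finset.mem_Ico, Finset.mem_product] at hx
      obtain ⟨⟨hk1, hk2⟩, ha, hc⟩ := hx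
      have hg := g_mem hk1 (by omega) ha hc
      exact Finset.mem_filter.mpr ⟨hg.1, hg.2⟩
    · rintro ⟨k, a, c⟩ hx ⟨k', a', c'⟩ hx' heq
      simp only [Finset.mem_sigma, Finset.mem_Ico, Finset.mem_product] at hx hx'
      obtain ⟨⟨hk1, hk2⟩, ha, hc⟩ := hx
      obtain ⟨⟨hk1', hk2'⟩, ha', hc'⟩ := hx'
      simp only at heq
      have hnmem : n ∉ a.map (· + (n - k)) := by
        intro hmem
        obtain ⟨y, hy, hys⟩ := List.mem_map.mp hmem
        have := lt_of_mem_of_perm_range (mem_A.mp ha).1 hy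
        omega
      have hnmem' : n ∉ a'.map (· + (n - k')) := by
        intro hmem
        obtain ⟨y, hy, hys⟩ := List.mem_map.mp hmem
        have := lt_of_mem_of_perm_range (mem_A.mp ha').1 hy
        omega
      obtain ⟨hpre, hsuf⟩ := prefix_eq_of_append_eq n _ _ _ _ hnmem hnmem' heq
      have hkk : k = k' := by
        have hlen := congrArg List.length hpre
        simp only [List.length_map] at hlen
        rw [length_of_mem_A ha, length_of_mem_A ha'] at hlen
        exact hlen
      subst hkk
      have haa : a = a' := by
        have hinj : Function.Injective (· + (n - k)) := fun u v huv =>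
          Nat.add_right_cancel huv
        exact List.map_injective_iff.mpr hinj hpre
      rw [haa, hsuf]
    · intro l hl
      rw [Finset.mem_filter] at hl
      obtain ⟨k, hk1, hk2, a, ha, c, hc, hgl⟩ := g_surj hl.1 hl.2
      refine ⟨⟨k, a, c⟩, ?_, hgl⟩
      simp only [Finset.mem_sigma, Finset.mem_Ico, Finset.mem_product]
      exact ⟨⟨hk1, by omega⟩, ha, hc⟩
    · rintro ⟨k, a, c⟩ hx
      simp only [Finset.mem_sigma, Finset.mem_Ico, Finset.mem_product] at hx
      obtain ⟨⟨hk1, hk2⟩, ha, hc⟩ := hx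
      exact (congrArg (fun e => (Polynomial.X : Polynomial ℤ) ^ e)
        (bd_g hk1 (by omega) ha hc)).symm
  have hico : Finset.Ico 1 (n + 1) = insert n (Finset.Ico 1 n) := by
    ext x
    simp only [Finset.mem_Ico, Finset.mem_insert]
    omega
  rw [bP, ← hsplit, hbb, hbij, Finset.sum_sigma, hico, Finset.sum_insert (by simp)]
  have hterm : ∑ p ∈ (A n) ×ˢ (A (n - n)),
      (Polynomial.X : Polynomial ℤ) ^ (bd p.1 + bd p.2 + if n = n then 0 else 1)
        = bP n := by
    rw [Finset.sum_product]
    simp only [Nat.sub_self, A_zero, Finset.sum_singleton, if_pos rfl, add_zero]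
    rw [bP]
    apply Finset.sum_congr rfl
    intro a _
    norm_num [show bd [] = 0 from rfl]
  have hterms : ∀ k ∈ Finset.Ico 1 n,
      ∑ p ∈ (A k) ×ˢ (A (n - k)),
        (Polynomial.X : Polynomial ℤ) ^ (bd p.1 + bd p.2 + if k = n then 0 else 1)
      = Polynomial.X * (bP k * bP (n - k)) := by
    intro k hk
    rw [Finset.mem_Ico] at hk
    rw [Finset.sum_product]
    have step1 : ∀ a : List ℕ,
        ∑ c ∈ A (n - k), (Polynomial.X : Polynomial ℤ) ^ (bd a + bd c + if k = n then 0 else 1)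
        = (Polynomial.X : Polynomial ℤ) ^ bd a * bP (n - k) * Polynomial.X := by
      intro a
      have hv : ∀ c ∈ A (n - k),
          (Polynomial.X : Polynomial ℤ) ^ (bd a + bd c + if k = n then 0 else 1)
            = Polynomial.X ^ bd a * Polynomial.X ^ bd c * Polynomial.X := by
        intro c _
        rw [if_neg (by omega : ¬ k = n), pow_add, pow_add, pow_one]
      rw [Finset.sum_congr rfl hv, ← Finset.sum_mul, ← Finset.mul_sum, bP]
    calc ∑ a ∈ A k, ∑ c ∈ A (n - k),
          (Polynomial.X : Polynomial ℤ) ^ (bd a + bd c + if k = n then 0 else 1)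
        = ∑ a ∈ A k, (Polynomial.X : Polynomial ℤ) ^ bd a * bP (n - k) * Polynomial.X := by
          exact Finset.sum_congr rfl fun a _ => step1 a
      _ = Polynomial.X * (bP k * bP (n - k)) := by
          rw [← Finset.sum_mul, ← Finset.sum_mul, ← bP]
          ring
  rw [hterm, Finset.sum_congr rfl hterms, ← Finset.mul_sum, if_neg (by omega : ¬ n = 0)]
  ring

end AvAux

namespace AvAux

theorem coeff_B132 (n : ℕ) : PowerSeries.coeff (R := Polynomial ℤ) n B132 = bP n := by
  rw [B132, PowerSeries.coeff_mk, bP]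
  apply sum_transfer' n (fun l => ¬ has132 l)
  · intro π
    simp only [Finset.mem_filter, Finset.mem_univ, true_and]
    exact avoids132_iff π
  · intro l
    exact mem_A

theorem coeff_Bbar132_pos (n : ℕ) (hn : 0 < n) :
    PowerSeries.coeff (R := Polynomial ℤ) n Bbar132 = bbP n := by
  rw [Bbar132, PowerSeries.coeff_mk, dif_pos hn, bbP]
  apply sum_transfer' n (fun l => ¬ has132 l ∧ l.headI = n - 1)
  · intro π
    simp only [Finset.mem_filter, Finset.mem_univ, true_and]
    rw [avoids132_iff, headI_toList hn]
  · intro l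
    rw [Finset.mem_filter, mem_A, and_assoc]

theorem coeff_Bbar132_zero : PowerSeries.coeff (R := Polynomial ℤ) 0 Bbar132 = 0 := by
  rw [Bbar132, PowerSeries.coeff_mk, dif_neg (by omega)]

theorem coeff_X_mul' (n : ℕ) (φ : PowerSeries (Polynomial ℤ)) :
    PowerSeries.coeff (R := Polynomial ℤ) n (PowerSeries.X * φ)
      = if n = 0 then 0 else PowerSeries.coeff (R := Polynomial ℤ) (n - 1) φ := by
  cases n with
  | zero =>
    rw [if_pos rfl]
    simp [PowerSeries.coeff_zero_eq_constantCoeff]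
  | succ m =>
    rw [if_neg (by omega), PowerSeries.coeff_succ_X_mul]
    rfl

end AvAux

namespace AvAux

theorem eq1 : B132 = 1 + Bbar132 + PowerSeries.X * (B132 - 1)
    + PowerSeries.C (R := Polynomial ℤ) Polynomial.X * PowerSeries.X * (B132 - 1) ^ 2 := by
  apply PowerSeries.ext
  intro n
  rw [map_add, map_add, map_add, coeff_B132, mul_assoc, PowerSeries.coeff_C_mul,
    coeff_X_mul', coeff_X_mul', PowerSeries.coeff_one]
  have hBm1 : ∀ m : ℕ, PowerSeries.coeff (R := Polynomial ℤ) m (B132 - 1)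
      = bP m - (if m = 0 then 1 else 0) := by
    intro m
    rw [map_sub, coeff_B132, PowerSeries.coeff_one]
  cases n with
  | zero =>
    rw [coeff_Bbar132_zero, if_pos rfl, if_pos rfl, if_pos rfl, bP_zero]
    ring
  | succ m =>
    rw [coeff_Bbar132_pos _ (Nat.succ_pos m), if_neg (by omega), if_neg (by omega),
      if_neg (by omega), Nat.add_sub_cancel, hBm1, sq, PowerSeries.coeff_mul]
    have hconv : ∑ p ∈ Finset.HasAntidiagonal.antidiagonal m,
        PowerSeries.coeff (R := Polynomial ℤ) p.1 (B132 - 1)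
          * PowerSeries.coeff (R := Polynomial ℤ) p.2 (B132 - 1)
        = ∑ k ∈ Finset.Ico 1 m, bP k * bP (m - k) := by
      rw [Finset.Nat.sum_antidiagonal_eq_sum_range_succ_mk]
      rw [← Finset.sum_subset (show Finset.Ico 1 m ⊆ Finset.range (m + 1) from ?_) ?_]
      · apply Finset.sum_congr rfl
        intro k hk
        rw [Finset.mem_Ico] at hk
        rw [hBm1, hBm1, if_neg (by omega), if_neg (by omega), sub_zero, sub_zero]
      · intro x hx
        rw [Finset.mem_Ico] at hx
        rw [Finset.mem_range]
        omega
      · intro k hk hk'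
        rw [Finset.mem_range] at hk
        rw [Finset.mem_Ico] at hk'
        rw [hBm1, hBm1]
        rcases Nat.eq_zero_or_pos k with rfl | hkpos
        · rw [if_pos rfl, bP_zero]
          ring
        · have : k = m := by omega
          subst this
          rw [Nat.sub_self, if_pos rfl, bP_zero, if_neg (by omega)]
          ring
    rw [hconv, bP_succ m]
    rcases Nat.eq_zero_or_pos m with rfl | hm
    · rw [if_pos rfl, if_pos rfl, bP_zero]
      ring
    · rw [if_neg (by omega), if_neg (by omega)]
      ring

theorem eq2 : Bbar132 = PowerSeries.X * (1 + Bbar132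
    + PowerSeries.C (R := Polynomial ℤ) Polynomial.X * (B132 - Bbar132 - 1)) := by
  apply PowerSeries.ext
  intro n
  rw [coeff_X_mul']
  cases n with
  | zero =>
    rw [coeff_Bbar132_zero, if_pos rfl]
  | succ m =>
    rw [if_neg (by omega), Nat.add_sub_cancel, coeff_Bbar132_pos _ (Nat.succ_pos m),
      map_add, map_add, PowerSeries.coeff_C_mul, map_sub, map_sub, coeff_B132,
      PowerSeries.coeff_one]
    rcases Nat.eq_zero_or_pos m with rfl | hm
    · rw [coeff_Bbar132_zero, if_pos rfl, bP_zero, bbP_one]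
      ring
    · rw [coeff_Bbar132_pos _ hm, if_neg (by omega),
        bbP_succ m hm]
      ring

end AvAux


/-- The system of functional equations

`B = 1 + B̄ + x(B−1) + tx(B−1)²` and `B̄ = x(1 + B̄ + t(B − B̄ − 1))`. -/
theorem genfun_system_avoids132 :
    letI X : PowerSeries (Polynomial ℤ) := PowerSeries.X
    letI T : PowerSeries (Polynomial ℤ) := PowerSeries.C Polynomial.X
    B132 = 1 + Bbar132 + X * (B132 - 1) + T * X * (B132 - 1) ^ 2 ∧
    Bbar132 = X * (1 + Bbar132 + T * (B132 - Bbar132 - 1)) :=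
  ⟨AvAux.eq1, AvAux.eq2⟩
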